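/- For any bookmaker belief g ∈ (0,1) and any bettor-belief distribution on [0,1] with a probability density function, the expected-profit function u is bounded above on the feasible region D = {(a,b) ∈ (0,1)² : a + b ≥ 1}, and u attains its maximum at some point (a*, b*) ∈ (0,1)² with a* + b* ≥ 1 (i.e., the supremum of u over D is attained in the interior (0,1)², not on the boundary a = 1 or b = 1). -/

import Mathlib

open MeasureTheory Set Filter
open scoped ENNReal Topology
set_option linter.unusedSectionVars false
set_option linter.unusedVariables false

/-- The bookmaker's expected profit at prices `(a, b)` with belief `g`, when the bettor
belief distribution is `μ`:
`u(a,b) = ((1-g)/(1-a) - g/a)·E[(p-a)₊] + (g/(1-b) - (1-g)/b)·E[(q-b)₊]`, `q = 1 - p`. -/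
noncomputable def profit (g : ℝ) (μ : Measure ℝ) (a b : ℝ) : ℝ :=
  ((1 - g) / (1 - a) - g / a) * (∫ x, max (x - a) 0 ∂μ) +
    (g / (1 - b) - (1 - g) / b) * (∫ x, max ((1 - x) - b) 0 ∂μ)

/-- The feasible price region `D = {(a,b) ∈ (0,1)² : a + b ≥ 1}`. -/
def feasible : Set (ℝ × ℝ) :=
  {q : ℝ × ℝ | q.1 ∈ Ioo (0 : ℝ) 1 ∧ q.2 ∈ Ioo (0 : ℝ) 1 ∧ 1 ≤ q.1 + q.2}


section aux_maximiser
noncomputable def Ifun (μ : Measure ℝ) (y : ℝ → ℝ) (t : ℝ) : ℝ := ∫ x, max (y x - t) 0 ∂μ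

noncomputable def phiF (c₁ c₂ : ℝ) (μ : Measure ℝ) (y : ℝ → ℝ) (t : ℝ) : ℝ :=
  (c₁ / (1 - t) - c₂ / t) * Ifun μ y t

section aux
variable {μ : Measure ℝ} [IsProbabilityMeasure μ] {y : ℝ → ℝ}

lemma Ifun_integrable (hy : Continuous y) (h1 : ∀ᵐ x ∂μ, y x < 1) (t : ℝ) :
    Integrable (fun x => max (y x - t) 0) μ := by
  refine Integrable.mono' (integrable_const (1 + |t|)) ?_ ?_
  · exact ((hy.sub continuous_const).max continuous_const).aestronglyMeasurable
  · filter_upwards [h1] with x hx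
    rw [Real.norm_eq_abs, abs_of_nonneg (le_max_right _ _)]
    have ht := neg_abs_le t
    exact max_le (by nlinarith) (by positivity)

lemma Ifun_nonneg (t : ℝ) : 0 ≤ Ifun μ y t :=
  integral_nonneg fun x => le_max_right _ _

lemma Ifun_le (hy : Continuous y) (h1 : ∀ᵐ x ∂μ, y x < 1) {t : ℝ} (ht : t ≤ 1) :
    Ifun μ y t ≤ 1 - t := by
  have : Ifun μ y t ≤ ∫ _x, (1 - t) ∂μ := by
    refine integral_mono_ae (Ifun_integrable hy h1 t) (integrable_const _) ?_
    filter_upwards [h1] with x hx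
    exact max_le (by linarith) (by linarith)
  simpa using this

lemma y_integrable (hy : Continuous y) (h0 : ∀ᵐ x ∂μ, 0 < y x) (h1 : ∀ᵐ x ∂μ, y x < 1) :
    Integrable y μ := by
  refine Integrable.mono' (integrable_const 1) hy.aestronglyMeasurable ?_
  filter_upwards [h0, h1] with x hx0 hx1
  rw [Real.norm_eq_abs, abs_of_nonneg hx0.le]; exact hx1.le

lemma Ifun_ge (hy : Continuous y) (h0 : ∀ᵐ x ∂μ, 0 < y x) (h1 : ∀ᵐ x ∂μ, y x < 1) (t : ℝ) :
    (∫ x, y x ∂μ) - t ≤ Ifun μ y t := by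
  have : ∫ x, (y x - t) ∂μ ≤ Ifun μ y t := by
    refine integral_mono_ae ((y_integrable hy h0 h1).sub (integrable_const t)) (Ifun_integrable hy h1 t) ?_
    exact Eventually.of_forall fun x => le_max_left _ _
  rwa [integral_sub (y_integrable hy h0 h1) (integrable_const t), integral_const,
    probReal_univ, one_smul] at this

lemma Ifun_one (hy : Continuous y) (h1 : ∀ᵐ x ∂μ, y x < 1) : Ifun μ y 1 = 0 := by
  rw [Ifun]
  apply integral_eq_zero_of_ae
  filter_upwards [h1] with x hx
  simp [max_eq_right (by linarith : y x - 1 ≤ 0)]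

lemma Ifun_mean_pos (hy : Continuous y) (h0 : ∀ᵐ x ∂μ, 0 < y x) (h1 : ∀ᵐ x ∂μ, y x < 1) :
    0 < ∫ x, y x ∂μ := by
  by_contra h
  push_neg at h
  have hnn : 0 ≤ᵐ[μ] y := h0.mono fun x hx => hx.le
  have hint := y_integrable hy h0 h1
  have h0' : ∫ x, y x ∂μ = 0 :=
    le_antisymm h (integral_nonneg_of_ae hnn)
  rw [integral_eq_zero_iff_of_nonneg_ae hnn hint] at h0'
  have : ∀ᵐ x ∂μ, False := by
    filter_upwards [h0, h0'] with x h1x h2x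
    rw [Pi.zero_apply] at h2x; exact absurd h2x (ne_of_gt h1x)
  have := ae_iff.mp this
  simp at this

lemma Ifun_continuous (hy : Continuous y) (h1 : ∀ᵐ x ∂μ, y x < 1) :
    Continuous (Ifun μ y) := by
  have : LipschitzWith 1 (Ifun μ y) := by
    rw [lipschitzWith_iff_dist_le_mul]
    intro s t
    rw [Real.dist_eq, Real.dist_eq, NNReal.coe_one, one_mul]
    have hint := Ifun_integrable hy h1 (μ := μ)
    rw [Ifun, Ifun, ← integral_sub (hint s) (hint t)]
    calc |∫ x, (max (y x - s) 0 - max (y x - t) 0) ∂μ|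
        ≤ ∫ x, |max (y x - s) 0 - max (y x - t) 0| ∂μ := by
          simpa using norm_integral_le_integral_norm (μ := μ) (fun x => max (y x - s) 0 - max (y x - t) 0)
      _ ≤ ∫ _x, |s - t| ∂μ := by
          refine integral_mono ((hint s).sub (hint t)).abs (integrable_const _) fun x => ?_
          calc |max (y x - s) 0 - max (y x - t) 0| ≤ |(y x - s) - (y x - t)| :=
                abs_max_sub_max_le_abs _ _ _
            _ = |s - t| := by rw [show y x - s - (y x - t) = -(s - t) by ring, abs_neg]
      _ = |s - t| := by simp
  exact this.continuous


lemma Ifun_tendsto (hy : Continuous y) (h0 : ∀ᵐ x ∂μ, 0 < y x) (h1 : ∀ᵐ x ∂μ, y x < 1) :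
    Tendsto (fun t => Ifun μ y t / (1 - t)) (𝓝[<] (1:ℝ)) (𝓝 0) := by
  have h0' : (0:ℝ) = ∫ x, (0:ℝ) ∂μ := by simp
  rw [h0']
  have := tendsto_integral_filter_of_dominated_convergence (μ := μ)
    (F := fun t x => max (y x - t) 0 / (1 - t)) (f := fun _ => (0:ℝ)) (bound := fun _ => 1)
    (l := 𝓝[<] (1:ℝ)) ?_ ?_ (integrable_const 1) ?_
  · refine this.congr' ?_
    filter_upwards [self_mem_nhdsWithin] with t (ht : t < 1)
    rw [Ifun, integral_div]
  · exact Eventually.of_forall fun t =>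
      (((hy.sub continuous_const).max continuous_const).div_const _).aestronglyMeasurable
  · filter_upwards [self_mem_nhdsWithin] with t (ht : t < 1)
    filter_upwards [h1] with x hx
    rw [Real.norm_eq_abs, abs_div, abs_of_nonneg (le_max_right _ _),
      abs_of_pos (by linarith : (0:ℝ) < 1 - t)]
    rw [div_le_one (by linarith)]
    exact max_le (by linarith) (by linarith)
  · filter_upwards [h1] with x hx
    have hev : ∀ᶠ t in 𝓝[<] (1:ℝ), max (y x - t) 0 / (1 - t) = 0 := by
      have : ∀ᶠ t in 𝓝 (1:ℝ), y x < t := eventually_gt_nhds hx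
      filter_upwards [nhdsWithin_le_nhds this] with t ht
      rw [max_eq_right (by linarith), zero_div]
    exact tendsto_const_nhds.congr' (by filter_upwards [hev] with t h using h.symm)

lemma phiF_one (hy : Continuous y) (h1 : ∀ᵐ x ∂μ, y x < 1) (c₁ c₂ : ℝ) :
    phiF c₁ c₂ μ y 1 = 0 := by
  rw [phiF, Ifun_one hy h1, mul_zero]

lemma phiF_le (hy : Continuous y) (h1 : ∀ᵐ x ∂μ, y x < 1) {c₁ c₂ : ℝ}
    (hc₁ : 0 ≤ c₁) (hc₂ : 0 ≤ c₂) {t : ℝ} (ht0 : 0 < t) (ht1 : t ≤ 1) :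
    phiF c₁ c₂ μ y t ≤ c₁ := by
  rcases eq_or_lt_of_le ht1 with rfl | ht1
  · rw [phiF_one hy h1]; exact hc₁
  have hI0 := Ifun_nonneg (μ := μ) (y := y) t
  have hI1 := Ifun_le hy h1 ht1.le
  have h1t : (0:ℝ) < 1 - t := by linarith
  calc phiF c₁ c₂ μ y t ≤ c₁ / (1 - t) * Ifun μ y t := by
        rw [phiF]
        have : 0 ≤ c₂ / t * Ifun μ y t := by positivity
        nlinarith
    _ ≤ c₁ / (1 - t) * (1 - t) := by
        have : 0 ≤ c₁ / (1 - t) := by positivity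
        nlinarith
    _ = c₁ := by field_simp

lemma phiF_nonneg (hy : Continuous y) (h1 : ∀ᵐ x ∂μ, y x < 1) {c₁ c₂ : ℝ}
    {t : ℝ} (ht0 : 0 < t) (ht1 : t ≤ 1) (hth : c₂ * (1 - t) ≤ c₁ * t) :
    0 ≤ phiF c₁ c₂ μ y t := by
  rcases eq_or_lt_of_le ht1 with rfl | ht1
  · rw [phiF_one hy h1]
  have h1t : (0:ℝ) < 1 - t := by linarith
  have hco : 0 ≤ c₁ / (1 - t) - c₂ / t := by
    rw [sub_nonneg, div_le_div_iff₀ ht0 h1t]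
    linarith
  exact mul_nonneg hco (Ifun_nonneg t)

lemma phiF_small (hy : Continuous y) (h0 : ∀ᵐ x ∂μ, 0 < y x) (h1 : ∀ᵐ x ∂μ, y x < 1)
    {c₁ c₂ C : ℝ} (hc₁ : 0 ≤ c₁) (hc₂ : 0 < c₂) (hC : 0 ≤ C) :
    ∃ ε > 0, ∀ t, 0 < t → t ≤ ε → phiF c₁ c₂ μ y t ≤ -C := by
  set m := ∫ x, y x ∂μ with hm
  have hmpos : 0 < m := Ifun_mean_pos hy h0 h1
  have hmle : m ≤ 1 := by
    have : m ≤ ∫ _x, (1:ℝ) ∂μ :=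
      integral_mono_ae (y_integrable hy h0 h1) (integrable_const 1)
        (h1.mono fun x hx => hx.le)
    simpa using this
  refine ⟨min (m/2) (c₂ * m / (2 * (C + c₁ + 1))), by positivity, fun t ht0 htε => ?_⟩
  have htm : t ≤ m / 2 := le_trans htε (min_le_left _ _)
  have htc : t ≤ c₂ * m / (2 * (C + c₁ + 1)) := le_trans htε (min_le_right _ _)
  have ht1 : t < 1 := by linarith
  have h1t : (0:ℝ) < 1 - t := by linarith
  have hIge : m / 2 ≤ Ifun μ y t := by
    have := Ifun_ge hy h0 h1 t; linarith
  have key : C + c₁ + 1 ≤ c₂ / t * Ifun μ y t := by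
    have h2 : c₂ * m / 2 ≤ c₂ * Ifun μ y t := by nlinarith
    rw [div_mul_eq_mul_div, le_div_iff₀ ht0]
    calc (C + c₁ + 1) * t ≤ c₂ * m / 2 := by
          rw [le_div_iff₀ (by positivity : (0:ℝ) < 2 * (C + c₁ + 1))] at htc
          linarith
      _ ≤ c₂ * Ifun μ y t := h2
  have hfirst : c₁ / (1 - t) * Ifun μ y t ≤ c₁ := by
    have hI1 := Ifun_le hy h1 ht1.le
    have hI0 := Ifun_nonneg (μ := μ) (y := y) t
    have : 0 ≤ c₁ / (1 - t) := by positivity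
    calc c₁ / (1 - t) * Ifun μ y t ≤ c₁ / (1 - t) * (1 - t) := by nlinarith
      _ = c₁ := by field_simp
  have : phiF c₁ c₂ μ y t = c₁ / (1 - t) * Ifun μ y t - c₂ / t * Ifun μ y t := by
    rw [phiF]; ring
  rw [this]
  linarith

lemma phiF_eq (c₁ c₂ : ℝ) (μ : Measure ℝ) (y : ℝ → ℝ) {t : ℝ} (ht0 : t ≠ 0) (ht1 : t ≠ 1) :
    phiF c₁ c₂ μ y t = (c₁ - c₂ * (1 - t) / t) * (Ifun μ y t / (1 - t)) := by
  rw [phiF]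
  have h1t : (1:ℝ) - t ≠ 0 := sub_ne_zero.mpr (Ne.symm ht1)
  field_simp

lemma phiF_continuousOn (hy : Continuous y) (h0 : ∀ᵐ x ∂μ, 0 < y x) (h1 : ∀ᵐ x ∂μ, y x < 1)
    (c₁ c₂ : ℝ) {ε : ℝ} (hε : 0 < ε) :
    ContinuousOn (phiF c₁ c₂ μ y) (Icc ε 1) := by
  intro t ht
  rcases eq_or_lt_of_le ht.2 with rfl | ht1
  · -- continuity at 1 within Icc ε 1
    have hsub : Icc ε 1 ⊆ insert 1 (Ioo (0:ℝ) 1) := by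
      intro s hs
      rcases eq_or_lt_of_le hs.2 with rfl | hlt
      · exact mem_insert _ _
      · exact mem_insert_of_mem _ ⟨lt_of_lt_of_le hε hs.1, hlt⟩
    refine ContinuousWithinAt.mono ?_ hsub
    rw [continuousWithinAt_insert_self]
    have hten : Tendsto (phiF c₁ c₂ μ y) (𝓝[Ioo (0:ℝ) 1] 1) (𝓝 0) := by
      have hmain : Tendsto (fun s => (c₁ - c₂ * (1 - s) / s) * (Ifun μ y s / (1 - s)))
          (𝓝[Ioo (0:ℝ) 1] 1) (𝓝 0) := by
        have hA : Tendsto (fun s : ℝ => c₁ - c₂ * (1 - s) / s) (𝓝[Ioo (0:ℝ) 1] 1) (𝓝 c₁) := by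
          have : ContinuousAt (fun s : ℝ => c₁ - c₂ * (1 - s) / s) 1 := by
            apply ContinuousAt.sub continuousAt_const
            exact (continuousAt_const.mul (continuousAt_const.sub continuousAt_id)).div
              continuousAt_id one_ne_zero
          have h2 : Tendsto (fun s : ℝ => c₁ - c₂ * (1 - s) / s) (𝓝[Ioo (0:ℝ) 1] 1)
              (𝓝 (c₁ - c₂ * (1 - 1) / 1)) :=
            this.continuousWithinAt (s := Ioo (0:ℝ) 1)
          norm_num at h2
          exact h2.mono_left (nhdsWithin_mono _ fun s hs => hs.2)
        have hB : Tendsto (fun s => Ifun μ y s / (1 - s)) (𝓝[Ioo (0:ℝ) 1] 1) (𝓝 0) :=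
          (Ifun_tendsto hy h0 h1).mono_left (nhdsWithin_mono _ fun s hs => hs.2)
        simpa using hA.mul hB
      refine hmain.congr' ?_
      filter_upwards [self_mem_nhdsWithin] with s hs
      rw [phiF_eq c₁ c₂ μ y (ne_of_gt hs.1) (ne_of_lt hs.2)]
    unfold ContinuousWithinAt
    rw [phiF_one hy h1]
    exact hten
  · -- continuity at interior point
    have : ContinuousAt (phiF c₁ c₂ μ y) t := by
      have ht0 : t ≠ 0 := ne_of_gt (lt_of_lt_of_le hε ht.1)
      have h1t : (1:ℝ) - t ≠ 0 := ne_of_gt (show (0:ℝ) < 1 - t by linarith)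
      apply ContinuousAt.mul
      · exact ((continuousAt_const.div (continuous_const.sub continuous_id).continuousAt
          h1t).sub (continuousAt_const.div continuousAt_id ht0))
      · exact (Ifun_continuous hy h1).continuousAt
    exact this.continuousWithinAt

end aux

end aux_maximiser

/-- The profit function is bounded above on the feasible region and attains its maximum at
some point of the feasible region (hence in the interior `(0,1)²`, with `a* + b* ≥ 1`). -/
theorem lem_existence_of_maximiser (g : ℝ) (hg : g ∈ Ioo (0 : ℝ) 1)
    (μ : Measure ℝ) [IsProbabilityMeasure μ] (f : ℝ → ℝ≥0∞)
    (hμ : μ = MeasureTheory.volume.withDensity f)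
    (hsupp : μ (Icc (0 : ℝ) 1)ᶜ = 0) :
    BddAbove ((fun q : ℝ × ℝ => profit g μ q.1 q.2) '' feasible) ∧
      ∃ q ∈ feasible, IsMaxOn (fun q : ℝ × ℝ => profit g μ q.1 q.2) feasible q := by
  obtain ⟨hg0, hg1⟩ := hg
  -- singletons are null for μ
  have hsing : ∀ c : ℝ, μ {c} = 0 := by
    intro c
    rw [hμ, withDensity_apply _ (measurableSet_singleton c),
      Measure.restrict_eq_zero.mpr (by simp)]
    exact lintegral_zero_measure _
  have hae : ∀ᵐ x ∂μ, x ∈ Ioo (0:ℝ) 1 := by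
    have h01 : ∀ᵐ x ∂μ, x ∈ Icc (0:ℝ) 1 := by
      refine ae_iff.mpr ?_
      have h : {x : ℝ | ¬ x ∈ Icc (0:ℝ) 1} = (Icc (0:ℝ) 1)ᶜ := rfl
      rw [h, hsupp]
    have hne0 : ∀ᵐ x ∂μ, x ≠ 0 := by
      rw [ae_iff]
      simpa [not_not, setOf_eq_eq_singleton] using hsing 0
    have hne1 : ∀ᵐ x ∂μ, x ≠ 1 := by
      rw [ae_iff]
      simpa [not_not, setOf_eq_eq_singleton] using hsing 1
    filter_upwards [h01, hne0, hne1] with x hx h0x h1x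
    exact ⟨lt_of_le_of_ne hx.1 (Ne.symm h0x), lt_of_le_of_ne hx.2 h1x⟩
  -- the two coordinate functions
  set y₁ : ℝ → ℝ := fun x => x with hy₁def
  set y₂ : ℝ → ℝ := fun x => 1 - x with hy₂def
  have hy₁ : Continuous y₁ := continuous_id
  have hy₂ : Continuous y₂ := continuous_const.sub continuous_id
  have h₁pos : ∀ᵐ x ∂μ, 0 < y₁ x := hae.mono fun x hx => hx.1
  have h₁lt : ∀ᵐ x ∂μ, y₁ x < 1 := hae.mono fun x hx => hx.2
  have h₂pos : ∀ᵐ x ∂μ, 0 < y₂ x := hae.mono fun x hx => by simp [hy₂def]; linarith [hx.2]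
  have h₂lt : ∀ᵐ x ∂μ, y₂ x < 1 := hae.mono fun x hx => by simp [hy₂def]; linarith [hx.1]
  -- profit is the sum of two phiF's
  have hprofit : ∀ a b : ℝ,
      profit g μ a b = phiF (1-g) g μ y₁ a + phiF g (1-g) μ y₂ b := fun a b => rfl
  set u : ℝ × ℝ → ℝ := fun q => profit g μ q.1 q.2 with hudef
  -- small-parameter bounds
  obtain ⟨ε₁, hε₁, hφsmall⟩ := phiF_small hy₁ h₁pos h₁lt
    (c₁ := 1-g) (c₂ := g) (C := g) (by linarith) hg0 hg0.le
  obtain ⟨ε₂, hε₂, hψsmall⟩ := phiF_small hy₂ h₂pos h₂lt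
    (c₁ := g) (c₂ := 1-g) (C := 1-g) hg0.le (by linarith) (by linarith)
  set ε : ℝ := min (min ε₁ ε₂) (min g (1-g)) with hεdef
  have hεpos : 0 < ε := by
    exact lt_min (lt_min hε₁ hε₂) (lt_min hg0 (by linarith))
  have hεg : ε ≤ g := le_trans (min_le_right _ _) (min_le_left _ _)
  have hεg' : ε ≤ 1 - g := le_trans (min_le_right _ _) (min_le_right _ _)
  have hεlt1 : ε < 1 := lt_of_le_of_lt hεg hg1
  -- the compact truncated region
  set K : Set (ℝ × ℝ) := (Icc ε 1 ×ˢ Icc ε 1) ∩ {q : ℝ × ℝ | 1 ≤ q.1 + q.2} with hKdef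
  have hKc : IsCompact K :=
    (isCompact_Icc.prod isCompact_Icc).inter_right
      (isClosed_le continuous_const (continuous_fst.add continuous_snd))
  have hgK : ((g, 1-g) : ℝ × ℝ) ∈ K := by
    rw [hKdef]
    simp only [Set.mem_inter_iff, Set.mem_prod, Set.mem_Icc, Set.mem_setOf_eq]
    refine ⟨⟨⟨hεg, hg1.le⟩, ⟨hεg', by linarith⟩⟩, by linarith⟩
  have hKne : K.Nonempty := ⟨_, hgK⟩
  have hu : ContinuousOn u K := by
    have h1 : ContinuousOn (fun q : ℝ × ℝ => phiF (1-g) g μ y₁ q.1) K :=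
      (phiF_continuousOn hy₁ h₁pos h₁lt (1-g) g hεpos).comp continuous_fst.continuousOn
        fun q hq => hq.1.1
    have h2 : ContinuousOn (fun q : ℝ × ℝ => phiF g (1-g) μ y₂ q.2) K :=
      (phiF_continuousOn hy₂ h₂pos h₂lt g (1-g) hεpos).comp continuous_snd.continuousOn
        fun q hq => hq.1.2
    have := h1.add h2
    refine this.congr fun q hq => ?_
    rw [hudef]; exact hprofit q.1 q.2
  obtain ⟨q₀, hq₀K, hq₀max⟩ := hKc.exists_isMaxOn hKne hu
  -- value at (g, 1-g) is nonnegative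
  have hval0 : 0 ≤ u (g, 1-g) := by
    rw [hudef]
    simp only
    rw [hprofit]
    have hφ : 0 ≤ phiF (1-g) g μ y₁ g :=
      phiF_nonneg hy₁ h₁lt hg0 hg1.le (by nlinarith)
    have hψ : 0 ≤ phiF g (1-g) μ y₂ (1-g) :=
      phiF_nonneg hy₂ h₂lt (by linarith) (by linarith) (by nlinarith)
    linarith
  -- every feasible point is dominated by q₀
  have claim1 : ∀ q ∈ feasible, u q ≤ u q₀ := by
    rintro ⟨a, b⟩ ⟨⟨ha0, ha1⟩, ⟨hb0, hb1⟩, hab⟩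
    by_cases hA : ε ≤ a
    · by_cases hB : ε ≤ b
      · exact hq₀max ⟨⟨⟨hA, ha1.le⟩, ⟨hB, hb1.le⟩⟩, hab⟩
      · push_neg at hB
        have hψb : phiF g (1-g) μ y₂ b ≤ -(1-g) :=
          hψsmall b hb0 (le_trans hB.le (le_trans (min_le_left _ _) (min_le_right _ _)))
        have hφa : phiF (1-g) g μ y₁ a ≤ 1-g :=
          phiF_le hy₁ h₁lt (by linarith) hg0.le ha0 ha1.le
        have : u (a, b) ≤ 0 := by
          rw [hudef]; simp only; rw [hprofit]; linarith
        exact le_trans this (le_trans hval0 (hq₀max hgK))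
    · push_neg at hA
      have hφa : phiF (1-g) g μ y₁ a ≤ -g :=
        hφsmall a ha0 (le_trans hA.le (le_trans (min_le_left _ _) (min_le_left _ _)))
      have hψb : phiF g (1-g) μ y₂ b ≤ g :=
        phiF_le hy₂ h₂lt hg0.le (by linarith) hb0 hb1.le
      have : u (a, b) ≤ 0 := by
        rw [hudef]; simp only; rw [hprofit]; linarith
      exact le_trans this (le_trans hval0 (hq₀max hgK))
  -- repair the maximiser so it lies in the open square
  obtain ⟨a₀, b₀⟩ := q₀
  obtain ⟨⟨⟨ha₀ε, ha₀1⟩, ⟨hb₀ε, hb₀1⟩⟩, hab₀⟩ := hq₀K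
  set b₁ : ℝ := if b₀ = 1 then max (1-g) (1-a₀) else b₀ with hb₁def
  have hb₁pos : 0 < b₁ := by
    rw [hb₁def]; split
    · exact lt_of_lt_of_le (by linarith) (le_max_left _ _)
    · exact lt_of_lt_of_le hεpos hb₀ε
  have hb₁lt : b₁ < 1 := by
    rw [hb₁def]; split
    · apply max_lt (by linarith) (by linarith [lt_of_lt_of_le hεpos ha₀ε])
    · exact lt_of_le_of_ne hb₀1 (by assumption)
  have hψmono : phiF g (1-g) μ y₂ b₀ ≤ phiF g (1-g) μ y₂ b₁ := by
    rw [hb₁def]; split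
    · rename_i h; rw [h, phiF_one hy₂ h₂lt]
      have ha₀pos : 0 < a₀ := lt_of_lt_of_le hεpos ha₀ε
      refine phiF_nonneg hy₂ h₂lt
        (lt_of_lt_of_le (by linarith : (0:ℝ) < 1 - g) (le_max_left _ _))
        (max_le (by linarith) (by linarith)) ?_
      have hge : 1 - g ≤ max (1-g) (1-a₀) := le_max_left _ _
      nlinarith [hge]
    · exact le_refl _
  set a₁ : ℝ := if a₀ = 1 then max g (1-b₁) else a₀ with ha₁def
  have ha₁pos : 0 < a₁ := by
    rw [ha₁def]; split
    · exact lt_of_lt_of_le hg0 (le_max_left _ _)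
    · exact lt_of_lt_of_le hεpos ha₀ε
  have ha₁lt : a₁ < 1 := by
    rw [ha₁def]; split
    · exact max_lt hg1 (by linarith)
    · exact lt_of_le_of_ne ha₀1 (by assumption)
  have hφmono : phiF (1-g) g μ y₁ a₀ ≤ phiF (1-g) g μ y₁ a₁ := by
    rw [ha₁def]; split
    · rename_i h; rw [h, phiF_one hy₁ h₁lt]
      refine phiF_nonneg hy₁ h₁lt
        (lt_of_lt_of_le hg0 (le_max_left _ _))
        (max_le hg1.le (by linarith)) ?_
      have hge : g ≤ max g (1-b₁) := le_max_left _ _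
      nlinarith [hge]
    · exact le_refl _
  have hsum : 1 ≤ a₁ + b₁ := by
    rw [ha₁def]; split
    · have : 1 - b₁ ≤ max g (1-b₁) := le_max_right _ _
      linarith
    · rw [hb₁def]; split
      · have : 1 - a₀ ≤ max (1-g) (1-a₀) := le_max_right _ _
        linarith
      · exact hab₀
  have hq₁feas : ((a₁, b₁) : ℝ × ℝ) ∈ feasible :=
    ⟨⟨ha₁pos, ha₁lt⟩, ⟨hb₁pos, hb₁lt⟩, hsum⟩
  have hle : u (a₀, b₀) ≤ u (a₁, b₁) := by
    rw [hudef]; simp only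
    rw [hprofit, hprofit]
    linarith
  have hmax : IsMaxOn u feasible (a₁, b₁) := by
    intro q hq
    exact le_trans (claim1 q hq) hle
  exact ⟨⟨u (a₁, b₁), by rintro x ⟨q, hq, rfl⟩; exact hmax hq⟩, ⟨(a₁, b₁), hq₁feas, hmax⟩⟩
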